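/- A point (x, y, σ, μ, λ) ∈ ℝ^d belongs to zer T if and only if all of the following hold: μ = 0_n; σ = M_n x; for every i, x_i ∈ Ω_i, y_i = A_i x_i − b_i, and 0 ∈ ∂[f_i(·, M_n x)](x_i) + N_{Ω_i}(x_i) + A_i^⊤λ; and λ ∈ ℝ^m_{≥0}, A x − b ≤ 0 componentwise, and ⟨λ, A x − b⟩ = 0. -/
import Mathlib


noncomputable section

open Matrix Finset Filter

/-- A vector in `ℝ^k`. -/
abbrev Vec (k : ℕ) := Fin k → ℝ

/-- A block vector in `ℝ^{kN}` (N blocks of size k). -/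
abbrev VecN (N k : ℕ) := Fin N → Vec k

/-- Standard inner product on `ℝ^k`. -/
def dot {k : ℕ} (u v : Vec k) : ℝ := ∑ j, u j * v j

/-- Standard inner product on `ℝ^{kN}`. -/
def dotN {N k : ℕ} (u v : VecN N k) : ℝ := ∑ i, dot (u i) (v i)

/-- Subdifferential of `g : ℝ^p → ℝ` at `x`. -/
def subdiff {p : ℕ} (g : Vec p → ℝ) (x : Vec p) : Set (Vec p) :=
  {v | ∀ z, g x + dot v (z - x) ≤ g z}

/-- Normal cone of `S ⊆ ℝ^p` at `x` (empty if `x ∉ S`). -/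
def normalCone {p : ℕ} (S : Set (Vec p)) (x : Vec p) : Set (Vec p) :=
  {v | x ∈ S ∧ ∀ z ∈ S, dot v (z - x) ≤ 0}

/-- The nonnegative orthant `ℝ^m_{≥0}`. -/
def orthant (m : ℕ) : Set (Vec m) := {v | ∀ j, 0 ≤ v j}

/-- Euclidean projection onto the nonnegative orthant. -/
def projPos {m : ℕ} (v : Vec m) : Vec m := fun j => max (v j) 0

/-- `M x = (1/N) Σ_i x_i` (the averaging map `M_n`, resp. its `m`-dim analogue). -/
def Mavg {N k : ℕ} (x : VecN N k) : Vec k := (N : ℝ)⁻¹ • ∑ i, x i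

/-- `P y = Σ_i y_i`. -/
def Psum {N k : ℕ} (y : VecN N k) : Vec k := ∑ i, y i

/-- `Mᵀ μ` : transpose of the averaging map. -/
def MavgT (N : ℕ) {k : ℕ} (μ : Vec k) : VecN N k := fun _ => (N : ℝ)⁻¹ • μ

/-- `Pᵀ λ` : transpose of the summing map. -/
def PsumT (N : ℕ) {k : ℕ} (l : Vec k) : VecN N k := fun _ => l

/-- Monotonicity of a set-valued map w.r.t. an inner product `ip`. -/
def MonoOn {V : Type} [AddCommGroup V] (ip : V → V → ℝ) (F : V → Set V) : Prop :=
  ∀ ω ω' u v, u ∈ F ω → v ∈ F ω' → 0 ≤ ip (u - v) (ω - ω')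

/-- Maximal monotonicity of a set-valued map w.r.t. an inner product `ip`. -/
def MaxMonoOn {V : Type} [AddCommGroup V] (ip : V → V → ℝ) (F : V → Set V) : Prop :=
  MonoOn ip F ∧ ∀ ω u, (∀ ω' v, v ∈ F ω' → 0 ≤ ip (u - v) (ω - ω')) → u ∈ F ω

/-- `A x = Σ_i A_i x_i` for `A = [A_1 ⋯ A_N]`. -/
def bigA {N n m : ℕ} (A : Fin N → Matrix (Fin m) (Fin n) ℝ) (x : VecN N n) : Vec m :=
  ∑ i, (A i).mulVec (x i)

/-- The collective feasible set `𝒳 = (∏_i Ω_i) ∩ {x : A x ≤ b}`. -/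
def Xfeas {N n m : ℕ} (Ω : Fin N → Set (Vec n)) (A : Fin N → Matrix (Fin m) (Fin n) ℝ)
    (b : Fin N → Vec m) : Set (VecN N n) :=
  {x | (∀ i, x i ∈ Ω i) ∧ ∀ j, bigA A x j ≤ (∑ i, b i) j}

/-- Extended pseudo-subdifferential `F_e(x, σ)`. -/
def Fe {N n : ℕ} (f : Fin N → Vec n → Vec n → ℝ) (x : VecN N n) (σ : Vec n) :
    Set (VecN N n) :=
  {g | ∀ i, g i ∈ subdiff (fun z => f i z σ) (x i)}

/-- Aggregative pseudo-subdifferential `F_a(x) = F_e(x, M_n x)`. -/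
def Fa {N n : ℕ} (f : Fin N → Vec n → Vec n → ℝ) (x : VecN N n) : Set (VecN N n) :=
  Fe f x (Mavg x)

/-- `x̄` is a variational generalized aggregative equilibrium (v-GAE):
it solves GVI(𝒳, F_a). -/
def isVGAE {N n m : ℕ} (Ω : Fin N → Set (Vec n)) (f : Fin N → Vec n → Vec n → ℝ)
    (A : Fin N → Matrix (Fin m) (Fin n) ℝ) (b : Fin N → Vec m) (xbar : VecN N n) : Prop :=
  xbar ∈ Xfeas Ω A b ∧ ∃ g ∈ Fa f xbar, ∀ x ∈ Xfeas Ω A b, 0 ≤ dotN g (x - xbar)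

/-- The local constraint set `C = {(x,y) : x_i ∈ Ω_i, y_i = A_i x_i - b_i}`. -/
def Cset {N n m : ℕ} (Ω : Fin N → Set (Vec n)) (A : Fin N → Matrix (Fin m) (Fin n) ℝ)
    (b : Fin N → Vec m) : Set (VecN N n × VecN N m) :=
  {p | ∀ i, p.1 i ∈ Ω i ∧ p.2 i = (A i).mulVec (p.1 i) - b i}

/-- Inner product on `ℝ^{nN} × ℝ^{mN}`. -/
def ip2 {N n m : ℕ} (p q : VecN N n × VecN N m) : ℝ := dotN p.1 q.1 + dotN p.2 q.2

/-- Normal cone in `ℝ^{nN} × ℝ^{mN}` (empty outside the set). -/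
def nconeC {N n m : ℕ} (C : Set (VecN N n × VecN N m)) (p : VecN N n × VecN N m) :
    Set (VecN N n × VecN N m) :=
  {v | p ∈ C ∧ ∀ q ∈ C, ip2 v (q - p) ≤ 0}

/-- The extended space `ℝ^d = ℝ^{nN} × ℝ^{mN} × ℝ^n × ℝ^n × ℝ^m`. -/
abbrev St (N n m : ℕ) := VecN N n × VecN N m × Vec n × Vec n × Vec m

/-- Inner product on the extended space. -/
def ipS {N n m : ℕ} (u v : St N n m) : ℝ :=
  dotN u.1 v.1 + dotN u.2.1 v.2.1 + dot u.2.2.1 v.2.2.1 + dot u.2.2.2.1 v.2.2.2.1 +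
    dot u.2.2.2.2 v.2.2.2.2

/-- `(x,y,σ,μ,λ) ∈ zer T` for the KKT operator `T`. -/
def inZerT {N n m : ℕ} (Ω : Fin N → Set (Vec n)) (f : Fin N → Vec n → Vec n → ℝ)
    (A : Fin N → Matrix (Fin m) (Fin n) ℝ) (b : Fin N → Vec m)
    (x : VecN N n) (y : VecN N m) (σ μ : Vec n) (lam : Vec m) : Prop :=
  ∃ g ∈ Fe f x σ, ∃ uw ∈ nconeC (Cset Ω A b) (x, y), ∃ v ∈ normalCone (orthant m) lam,
    g + uw.1 - MavgT N μ = 0 ∧ uw.2 + PsumT N lam = 0 ∧ μ = 0 ∧ Mavg x - σ = 0 ∧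
      v - Psum y = 0

/-- Inner product on `ℝ^{nN} × ℝ^n`. -/
def ipXs {N n : ℕ} (p q : VecN N n × Vec n) : ℝ := dotN p.1 q.1 + dot p.2 q.2

/-- The extended pseudo-subdifferential map `(x,σ) ↦ F_e(x,σ) × {0}`. -/
def FeExt {N n : ℕ} (f : Fin N → Vec n → Vec n → ℝ) (p : VecN N n × Vec n) :
    Set (VecN N n × Vec n) :=
  {q | q.1 ∈ Fe f p.1 p.2 ∧ q.2 = 0}

/-- The operator `𝒜(x,y,σ,μ,λ) = (F_e(x,σ) + N_C(x,y)-part, 0, 0, 0)`. -/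
def Aop {N n m : ℕ} (Ω : Fin N → Set (Vec n)) (f : Fin N → Vec n → Vec n → ℝ)
    (A : Fin N → Matrix (Fin m) (Fin n) ℝ) (b : Fin N → Vec m) (ω : St N n m) :
    Set (St N n m) :=
  {t | ∃ g ∈ Fe f ω.1 ω.2.2.1, ∃ uw ∈ nconeC (Cset Ω A b) (ω.1, ω.2.1),
    t = (g + uw.1, uw.2, 0, 0, 0)}

/-- The skew-symmetric linear map `S`. -/
def Smap {N n m : ℕ} (ω : St N n m) : St N n m :=
  (-MavgT N ω.2.2.2.1, PsumT N ω.2.2.2.2, ω.2.2.2.1, Mavg ω.1 - ω.2.2.1, -Psum ω.2.1)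

/-- The operator `ℬ = S + (0,0,0,0, N_{ℝ^m_{≥0}})`. -/
def Bop {N n m : ℕ} (ω : St N n m) : Set (St N n m) :=
  {t | ∃ v ∈ normalCone (orthant m) ω.2.2.2.2, t = Smap ω + (0, 0, 0, 0, v)}

/-- The block-diagonal positive-definite step-size matrix `Γ` acting on the extended space. -/
def GammaMap {N n m : ℕ} (γ : Fin N → ℝ) (α β δ : ℝ) (ω : St N n m) : St N n m :=
  (fun i => γ i • ω.1 i, fun i => γ i • ω.2.1 i, α • ω.2.2.1, β • ω.2.2.2.1,
    δ • ω.2.2.2.2)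

lemma dot_comm' {k : ℕ} (u v : Vec k) : dot u v = dot v u := by
  simp [dot, mul_comm]

lemma dot_sub_right {k : ℕ} (u v w : Vec k) :
    dot u (v - w) = dot u v - dot u w := by
  simp [dot, mul_sub, Finset.sum_sub_distrib]

lemma dot_add_left {k : ℕ} (u v w : Vec k) :
    dot (u + v) w = dot u w + dot v w := by
  simp [dot, add_mul, Finset.sum_add_distrib]

lemma dot_neg_left {k : ℕ} (u v : Vec k) : dot (-u) v = -dot u v := by
  simp [dot, neg_mul]

lemma dot_zero_right {k : ℕ} (u : Vec k) : dot u 0 = 0 := by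
  simp [dot]

lemma dot_transpose_mulVec {m n : ℕ} (A : Matrix (Fin m) (Fin n) ℝ)
    (l : Vec m) (z : Vec n) : dot (Aᵀ.mulVec l) z = dot l (A.mulVec z) := by
  simp only [dot, Matrix.mulVec, dotProduct, Matrix.transpose_apply,
    Finset.sum_mul, Finset.mul_sum]
  rw [Finset.sum_comm]
  refine Finset.sum_congr rfl fun j _ => Finset.sum_congr rfl fun k _ => by ring

lemma ncone_orthant {m : ℕ} (v lam : Vec m) :
    v ∈ normalCone (orthant m) lam ↔
      (∀ j, 0 ≤ lam j) ∧ (∀ j, v j ≤ 0) ∧ dot v lam = 0 := by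
  constructor
  · rintro ⟨hl, h⟩
    refine ⟨hl, fun j => ?_, ?_⟩
    · have hz : (lam + Pi.single j 1) ∈ orthant m := by
        intro k
        have h1 : (0:ℝ) ≤ (Pi.single j 1 : Vec m) k := by
          rcases eq_or_ne k j with hk | hk <;> simp [Pi.single_apply, hk]
        have := hl k
        show 0 ≤ lam k + (Pi.single j 1 : Vec m) k
        linarith
      have := h _ hz
      have hd : dot v (lam + Pi.single j 1 - lam) = v j := by
        simp [dot, Pi.single_apply, mul_ite]
      linarith [hd ▸ this]
    · have h0 : (0 : Vec m) ∈ orthant m := fun k => le_refl 0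
      have h2 : (fun k => 2 * lam k) ∈ orthant m := fun k => by
        have := hl k; dsimp; linarith
      have e0 : dot v ((0 : Vec m) - lam) = -dot v lam := by
        simp [dot, mul_comm]
      have e2 : dot v ((fun k => 2 * lam k) - lam) = dot v lam := by
        simp only [dot]
        refine Finset.sum_congr rfl fun k _ => by
          show v k * (2 * lam k - lam k) = v k * lam k; ring
      have t0 := h _ h0
      have t2 := h _ h2
      rw [e0] at t0; rw [e2] at t2
      linarith
  · rintro ⟨hl, hv, hc⟩
    refine ⟨hl, fun z hz => ?_⟩
    have : dot v (z - lam) = dot v z - dot v lam := dot_sub_right _ _ _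
    rw [this, hc, sub_zero]
    exact Finset.sum_nonpos fun k _ => mul_nonpos_of_nonpos_of_nonneg (hv k) (hz k)

lemma psum_eq_bigA {N n m : ℕ} (A : Fin N → Matrix (Fin m) (Fin n) ℝ)
    (b : Fin N → Vec m) (x : VecN N n) (y : VecN N m)
    (hy : ∀ i, y i = (A i).mulVec (x i) - b i) :
    Psum y = bigA A x - ∑ i, b i := by
  funext j
  simp only [Psum, bigA, Pi.sub_apply, Finset.sum_apply]
  rw [← Finset.sum_sub_distrib]
  exact Finset.sum_congr rfl fun i _ => by rw [hy i]; simp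

/-- full characterization of `zer T`: `μ = 0`, `σ = M_n x`, local KKT
stationarity of each agent, and complementarity of `λ` with the coupling constraint. -/
theorem stmt13 {N n m : ℕ} (hN : 0 < N) (hn : 0 < n) (hm : 0 < m)
    (Ω : Fin N → Set (Vec n)) (f : Fin N → Vec n → Vec n → ℝ)
    (A : Fin N → Matrix (Fin m) (Fin n) ℝ) (b : Fin N → Vec m)
    (hΩne : ∀ i, (Ω i).Nonempty) (hΩcp : ∀ i, IsCompact (Ω i))
    (hΩcv : ∀ i, Convex ℝ (Ω i))
    (hfcont : ∀ i, Continuous (fun p : Vec n × Vec n => f i p.1 p.2))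
    (hfconv : ∀ i w, ConvexOn ℝ Set.univ (fun z => f i z w))
    (x : VecN N n) (y : VecN N m) (σ μ : Vec n) (lam : Vec m) :
    inZerT Ω f A b x y σ μ lam ↔
      μ = 0 ∧ σ = Mavg x ∧
      (∀ i, x i ∈ Ω i ∧ y i = (A i).mulVec (x i) - b i ∧
        ∃ g ∈ subdiff (fun z => f i z (Mavg x)) (x i), ∃ u ∈ normalCone (Ω i) (x i),
          g + u + (A i)ᵀ.mulVec lam = 0) ∧
      (∀ j, 0 ≤ lam j) ∧ (∀ j, bigA A x j ≤ (∑ i, b i) j) ∧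
      dot lam (bigA A x - ∑ i, b i) = 0 := by
  constructor
  · rintro ⟨g, hg, uw, ⟨hC, hineq⟩, v, hv, e1, e2, e3, e4, e5⟩
    subst e3
    have hσ : σ = Mavg x := (sub_eq_zero.mp e4).symm
    have hu1 : uw.1 = -g := by
      have h0 : MavgT N (0 : Vec n) = 0 := by funext i; simp [MavgT]
      rw [h0, sub_zero] at e1
      exact eq_neg_of_add_eq_zero_right e1
    have hu2 : ∀ i, uw.2 i = -lam := by
      intro i
      have := congrFun e2 i
      exact eq_neg_of_add_eq_zero_left this
    have hv5 : v = Psum y := sub_eq_zero.mp e5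
    have key : ∀ i, ∀ z ∈ Ω i,
        dot (-(g i) - (A i)ᵀ.mulVec lam) (z - x i) ≤ 0 := by
      intro i z hz
      set q : VecN N n × VecN N m :=
        (Function.update x i z, Function.update y i ((A i).mulVec z - b i)) with hq
      have hqC : q ∈ Cset Ω A b := by
        intro j
        rcases eq_or_ne j i with hj | hj
        · subst hj
          refine ⟨?_, ?_⟩ <;> simp [q, Function.update_self]
          exact hz
        · refine ⟨?_, ?_⟩ <;> simp [q, Function.update_of_ne hj]
          exacts [(hC j).1, (hC j).2]
      have h := hineq q hqC
      have ea : dotN uw.1 (q.1 - x) = dot (uw.1 i) (z - x i) := by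
        simp only [dotN]
        rw [Finset.sum_eq_single i]
        · congr 1
          funext k
          simp [q, Function.update_self]
        · intro j _ hj
          have hz0 : (q.1 - x) j = 0 := by
            simp [q, Function.update_of_ne hj]
          rw [hz0, dot_zero_right]
        · intro h'; exact absurd (Finset.mem_univ i) h'
      have eb : dotN uw.2 (q.2 - y) = dot (uw.2 i) ((A i).mulVec (z - x i)) := by
        simp only [dotN]
        rw [Finset.sum_eq_single i]
        · congr 1
          have hyi : y i = (A i).mulVec (x i) - b i := (hC i).2
          show Function.update y i ((A i).mulVec z - b i) i - y i = _
          rw [Function.update_self, hyi, Matrix.mulVec_sub]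
          abel
        · intro j _ hj
          have hz0 : (q.2 - y) j = 0 := by
            simp [q, Function.update_of_ne hj]
          rw [hz0, dot_zero_right]
        · intro h'; exact absurd (Finset.mem_univ i) h'
      have hip : ip2 uw (q - (x, y)) =
          dot (uw.1 i) (z - x i) + dot (uw.2 i) ((A i).mulVec (z - x i)) := by
        show dotN uw.1 (q.1 - x) + dotN uw.2 (q.2 - y) = _
        rw [ea, eb]
      rw [hip] at h
      rw [hu1] at h
      rw [hu2 i] at h
      have ht : dot (-lam) ((A i).mulVec (z - x i)) =
          -dot ((A i)ᵀ.mulVec lam) (z - x i) := by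
        rw [dot_neg_left, dot_transpose_mulVec]
      have hsplit : dot (-(g i) - (A i)ᵀ.mulVec lam) (z - x i) =
          dot (-(g i)) (z - x i) + dot (-((A i)ᵀ.mulVec lam)) (z - x i) := by
        rw [sub_eq_add_neg, dot_add_left]
      rw [hsplit, dot_neg_left ((A i)ᵀ.mulVec lam)]
      have : (-g) i = -(g i) := rfl
      rw [this] at h
      linarith [h, ht]
    have hw : Psum y = bigA A x - ∑ i, b i :=
      psum_eq_bigA A b x y (fun i => (hC i).2)
    have hvw : v = bigA A x - ∑ i, b i := hv5.trans hw
    obtain ⟨hl, hvj, hdc⟩ := (ncone_orthant v lam).mp hv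
    refine ⟨rfl, hσ, ?_, hl, ?_, ?_⟩
    · intro i
      refine ⟨(hC i).1, (hC i).2, g i, ?_, -(g i) - (A i)ᵀ.mulVec lam,
        ⟨(hC i).1, key i⟩, ?_⟩
      · rw [← hσ]; exact hg i
      · abel
    · intro j
      have := hvj j
      rw [hvw] at this
      have h' : bigA A x j - (∑ i, b i) j ≤ 0 := this
      linarith
    · rw [← hvw, dot_comm']; exact hdc
  · rintro ⟨hμ, hσ, h3, hl, hfe, hcomp⟩
    subst hμ
    choose g hgs u hus heq using fun i => (h3 i).2.2
    refine ⟨g, ?_, (-g, fun _ => -lam), ⟨fun i => ⟨(h3 i).1, (h3 i).2.1⟩, ?_⟩,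
      bigA A x - ∑ i, b i, ?_, ?_, ?_, rfl, ?_, ?_⟩
    · intro i; rw [hσ]; exact hgs i
    · intro q hq
      show dotN (-g) (q.1 - x) + dotN (fun _ => -lam) (q.2 - y) ≤ 0
      rw [dotN, dotN, ← Finset.sum_add_distrib]
      apply Finset.sum_nonpos
      intro i _
      show dot (-(g i)) (q.1 i - x i) + dot (-lam) (q.2 i - y i) ≤ 0
      have hqe : q.2 i - y i = (A i).mulVec (q.1 i - x i) := by
        have h1 : q.2 i = (A i).mulVec (q.1 i) - b i := (hq i).2
        have h2 : y i = (A i).mulVec (x i) - b i := (h3 i).2.1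
        rw [h1, h2, Matrix.mulVec_sub]
        abel
      have hng : -(g i) = u i + (A i)ᵀ.mulVec lam := by
        have h := heq i
        rw [add_assoc] at h
        exact (neg_eq_of_add_eq_zero_right h)
      rw [hqe, hng, dot_add_left, dot_neg_left, dot_transpose_mulVec]
      have := (hus i).2 (q.1 i) (hq i).1
      linarith
    · refine (ncone_orthant _ _).mpr ⟨hl, fun j => ?_, ?_⟩
      · have := hfe j
        show bigA A x j - (∑ i, b i) j ≤ 0
        linarith
      · rw [dot_comm']; exact hcomp
    · funext i
      show g i + (-g) i - (N:ℝ)⁻¹ • (0 : Vec n) = 0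
      simp
    · funext i
      show -lam + lam = 0
      simp
    · rw [hσ, sub_self]
    · rw [psum_eq_bigA A b x y (fun i => (h3 i).2.1), sub_self]
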